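/- Every finitely generated subgroup of the commutator subgroup [A(Γ), A(Γ)] of a right-angled Artin group on a finite graph Γ embeds into [GP_m(Γ), GP_m(Γ)] for some finite m ≥ 2. -/

import Mathlib

open Monoid
open scoped commutatorElement

variable {V : Type*} (Γ : SimpleGraph V) (G : V → Type*) [∀ v, Group (G v)]

/-- The defining relators of the graph product: commutators of elements of
vertex groups attached to adjacent vertices. -/
def graphProductRels : Set (Monoid.CoprodI G) :=
  {x | ∃ (u v : V) (g : G u) (h : G v), Γ.Adj u v ∧
        x = ⁅Monoid.CoprodI.of g, Monoid.CoprodI.of h⁆}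

/-- The graph product of the groups `G v` over the graph `Γ`. -/
def GraphProduct : Type _ :=
  Monoid.CoprodI G ⧸ Subgroup.normalClosure (graphProductRels Γ G)

instance : Group (GraphProduct Γ G) :=
  QuotientGroup.Quotient.group _

/-- The canonical map from a vertex group into the graph product. -/
def GraphProduct.of (v : V) : G v →* GraphProduct Γ G :=
  (QuotientGroup.mk' _).comp Monoid.CoprodI.of

/-- The natural projection from the graph product onto the direct product of the
vertex groups. -/
def GraphProduct.proj [DecidableEq V] : GraphProduct Γ G →* ((v : V) → G v) :=
  QuotientGroup.lift _ (Monoid.CoprodI.lift fun v => MonoidHom.mulSingle G v)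
    (Subgroup.normalClosure_le_normal <| by
      rintro x ⟨u, v, g, h, hadj, rfl⟩
      have huv : u ≠ v := hadj.ne
      simp only [SetLike.mem_coe, MonoidHom.mem_ker, map_commutatorElement,
        Monoid.CoprodI.lift_of]
      exact commutatorElement_eq_one_iff_commute.mpr
        (Pi.mulSingle_commute huv g h))

/-- The graph product kernel: the kernel of the natural surjection onto the
direct product of the vertex groups. -/
def GraphProductKernel [DecidableEq V] : Subgroup (GraphProduct Γ G) :=
  MonoidHom.ker (GraphProduct.proj Γ G)

set_option linter.unusedSectionVars false

namespace GPNF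

variable {V : Type*} (Γ : SimpleGraph V) {K : Type*} [Group K]
variable [DecidableEq V] [DecidableRel Γ.Adj]

def pull (v : V) : List (V × K) → Option (K × List (V × K))
  | [] => none
  | (u, h) :: t =>
    if u = v then some (h, t)
    else if Γ.Adj u v then ((pull v t).map fun p => (p.1, (u, h) :: p.2)) else none

def Red : List (V × K) → Prop
  | [] => True
  | (v, g) :: t => g ≠ 1 ∧ pull Γ v t = none ∧ Red t

inductive Swap : List (V × K) → List (V × K) → Prop
  | mk (p q : List (V × K)) (a b : V × K) (h : Γ.Adj a.1 b.1) :
      Swap (p ++ a :: b :: q) (p ++ b :: a :: q)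

def WEq : List (V × K) → List (V × K) → Prop := Relation.EqvGen (Swap Γ)

variable {Γ}

@[simp] theorem pull_nil (v : V) : pull Γ v ([] : List (V × K)) = none := rfl

theorem pull_cons (v u : V) (h : K) (t : List (V × K)) :
    pull Γ v ((u, h) :: t) =
      if u = v then some (h, t)
      else if Γ.Adj u v then ((pull Γ v t).map fun p => (p.1, (u, h) :: p.2)) else none := rfl

@[simp] theorem pull_cons_self (v : V) (h : K) (t : List (V × K)) :
    pull Γ v ((v, h) :: t) = some (h, t) := by simp [pull_cons]

theorem pull_cons_adj {v u : V} (huv : Γ.Adj u v) (h : K) (t : List (V × K)) :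
    pull Γ v ((u, h) :: t) = ((pull Γ v t).map fun p => (p.1, (u, h) :: p.2)) := by
  rw [pull_cons, if_neg huv.ne, if_pos huv]

theorem pull_cons_nadj {v u : V} (hne : u ≠ v) (hn : ¬ Γ.Adj u v) (h : K)
    (t : List (V × K)) : pull Γ v ((u, h) :: t) = none := by
  rw [pull_cons, if_neg hne, if_neg hn]

theorem Swap.symm' {w w' : List (V × K)} (h : Swap Γ w w') : Swap Γ w' w := by
  rcases h with ⟨p, q, a, b, hab⟩; exact ⟨p, q, b, a, hab.symm⟩

theorem weq_refl (w : List (V × K)) : WEq Γ w w := Relation.EqvGen.refl w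

theorem WEq.symm' {w w' : List (V × K)} (h : WEq Γ w w') : WEq Γ w' w :=
  Relation.EqvGen.symm _ _ h

theorem WEq.trans' {w₁ w₂ w₃ : List (V × K)} (h : WEq Γ w₁ w₂) (h' : WEq Γ w₂ w₃) :
    WEq Γ w₁ w₃ := Relation.EqvGen.trans _ _ _ h h'

theorem Swap.weq {w w' : List (V × K)} (h : Swap Γ w w') : WEq Γ w w' :=
  Relation.EqvGen.rel _ _ h

theorem Swap.length {w w' : List (V × K)} (h : Swap Γ w w') : w.length = w'.length := by
  rcases h with ⟨p, q, a, b, _⟩; simp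

theorem WEq.length {w w' : List (V × K)} (h : WEq Γ w w') : w.length = w'.length := by
  induction h with
  | rel _ _ h => exact h.length
  | refl => rfl
  | symm _ _ _ ih => exact ih.symm
  | trans _ _ _ _ _ ih₁ ih₂ => exact ih₁.trans ih₂

theorem Swap.cons {w w' : List (V × K)} (l : V × K) (h : Swap Γ w w') :
    Swap Γ (l :: w) (l :: w') := by
  rcases h with ⟨p, q, a, b, hab⟩
  exact Swap.mk (l :: p) q a b hab

theorem WEq.cons {w w' : List (V × K)} (l : V × K) (h : WEq Γ w w') :
    WEq Γ (l :: w) (l :: w') := by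
  induction h with
  | rel _ _ h => exact (h.cons l).weq
  | refl => exact weq_refl _
  | symm _ _ _ ih => exact ih.symm'
  | trans _ _ _ _ _ ih₁ ih₂ => exact ih₁.trans' ih₂

theorem swap_head {a b : V × K} (h : Γ.Adj a.1 b.1) (t : List (V × K)) :
    WEq Γ (a :: b :: t) (b :: a :: t) := (Swap.mk [] t a b h).weq

/-- If `pull` succeeds, the word is shuffle equivalent to the pulled-out form. -/
theorem pull_some_weq {v : V} {w : List (V × K)} {k : K} {t : List (V × K)}
    (h : pull Γ v w = some (k, t)) : WEq Γ w ((v, k) :: t) := by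
  induction w generalizing t with
  | nil => simp at h
  | cons l r ih =>
    obtain ⟨u, x⟩ := l
    by_cases huv : u = v
    · subst huv; simp at h; obtain ⟨rfl, rfl⟩ := h; exact weq_refl _
    · by_cases hadj : Γ.Adj u v
      · rw [pull_cons_adj hadj] at h
        rcases hp : pull Γ v r with _ | ⟨k', t'⟩ <;> rw [hp] at h <;> simp at h
        obtain ⟨rfl, rfl⟩ := h
        exact ((ih hp).cons _).trans' (swap_head hadj t')
      · rw [pull_cons_nadj huv hadj] at h; simp at h
/-- behaviour of `pull` under an elementary swap. -/
theorem pull_swap (v : V) (p q : List (V × K)) (a b : V × K) (hab : Γ.Adj a.1 b.1) :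
    (pull Γ v (p ++ a :: b :: q) = none ↔ pull Γ v (p ++ b :: a :: q) = none) ∧
    (∀ k t, pull Γ v (p ++ a :: b :: q) = some (k, t) →
      ∃ t', pull Γ v (p ++ b :: a :: q) = some (k, t') ∧ WEq Γ t t') := by
  induction p with
  | nil =>
    obtain ⟨ua, xa⟩ := a; obtain ⟨ub, xb⟩ := b
    simp only [List.nil_append]
    have hne : ua ≠ ub := hab.ne
    by_cases hav : ua = v
    · subst hav
      rw [pull_cons_self, pull_cons_adj hab.symm, pull_cons_self]
      simp only [Option.map_some]
      refine ⟨by simp, ?_⟩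
      rintro k t h
      simp only [Option.some.injEq, Prod.mk.injEq] at h
      obtain ⟨rfl, rfl⟩ := h
      exact ⟨_, rfl, weq_refl _⟩
    · by_cases hbv : ub = v
      · subst hbv
        rw [pull_cons_adj hab, pull_cons_self, pull_cons_self]
        simp only [Option.map_some]
        exact ⟨by simp, fun k t h => ⟨t, h, weq_refl _⟩⟩
      · by_cases haav : Γ.Adj ua v
        · by_cases hbbv : Γ.Adj ub v
          · rw [pull_cons_adj haav, pull_cons_adj hbbv, pull_cons_adj hbbv,
              pull_cons_adj haav]
            rcases hq : pull Γ v q with _ | ⟨k₀, t₀⟩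
            · simp
            · simp only [Option.map_some]
              refine ⟨by simp, ?_⟩
              rintro k t h
              simp only [Option.some.injEq, Prod.mk.injEq] at h
              obtain ⟨rfl, rfl⟩ := h
              exact ⟨_, rfl, swap_head hab t₀⟩
          · rw [pull_cons_adj haav, pull_cons_nadj hbv hbbv,
              pull_cons_nadj hbv hbbv]
            simp
        · rw [pull_cons_nadj hav haav]
          by_cases hbbv : Γ.Adj ub v
          · rw [pull_cons_adj hbbv, pull_cons_nadj hav haav]
            simp
          · rw [pull_cons_nadj hbv hbbv]
            simp
  | cons c p' ih =>
    obtain ⟨uc, xc⟩ := c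
    simp only [List.cons_append]
    by_cases hcv : uc = v
    · subst hcv
      rw [pull_cons_self, pull_cons_self]
      refine ⟨by simp, ?_⟩
      rintro k t h
      simp only [Option.some.injEq, Prod.mk.injEq] at h
      obtain ⟨rfl, rfl⟩ := h
      exact ⟨_, rfl, (Swap.mk p' q a b hab).weq⟩
    · by_cases hadj : Γ.Adj uc v
      · rw [pull_cons_adj hadj, pull_cons_adj hadj]
        rcases h1 : pull Γ v (p' ++ a :: b :: q) with _ | ⟨k₀, t₀⟩
        · rcases h2 : pull Γ v (p' ++ b :: a :: q) with _ | ⟨k₁, t₁⟩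
          · simp
          · rw [ih.1.mp h1] at h2; simp at h2
        · obtain ⟨t', ht', hweq⟩ := ih.2 k₀ t₀ h1
          rw [ht']
          simp only [Option.map_some]
          refine ⟨by simp, ?_⟩
          rintro k t h
          simp only [Option.some.injEq, Prod.mk.injEq] at h
          obtain ⟨rfl, rfl⟩ := h
          exact ⟨_, rfl, hweq.cons _⟩
      · rw [pull_cons_nadj hcv hadj, pull_cons_nadj hcv hadj]
        simp


/-- Behaviour of `pull` under shuffle equivalence. -/
theorem pull_weq {w w' : List (V × K)} (h : WEq Γ w w') (v : V) :
    (pull Γ v w = none ↔ pull Γ v w' = none) ∧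
    (∀ k t, pull Γ v w = some (k, t) →
      ∃ t', pull Γ v w' = some (k, t') ∧ WEq Γ t t') ∧
    (∀ k t, pull Γ v w' = some (k, t) →
      ∃ t', pull Γ v w = some (k, t') ∧ WEq Γ t t') := by
  induction h with
  | rel x y hxy =>
    obtain ⟨p, q, a, b, hab⟩ := hxy
    refine ⟨(pull_swap v p q a b hab).1, (pull_swap v p q a b hab).2, ?_⟩
    intro k t ht
    obtain ⟨t', ht', hw⟩ := (pull_swap v p q b a hab.symm).2 k t ht
    exact ⟨t', ht', hw⟩
  | refl x => exact ⟨Iff.rfl, fun k t ht => ⟨t, ht, weq_refl _⟩,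
      fun k t ht => ⟨t, ht, weq_refl _⟩⟩
  | symm x y _ ih => exact ⟨ih.1.symm, ih.2.2, ih.2.1⟩
  | trans x y z _ _ ih₁ ih₂ =>
    refine ⟨ih₁.1.trans ih₂.1, ?_, ?_⟩
    · intro k t ht
      obtain ⟨t₁, ht₁, hw₁⟩ := ih₁.2.1 k t ht
      obtain ⟨t₂, ht₂, hw₂⟩ := ih₂.2.1 k t₁ ht₁
      exact ⟨t₂, ht₂, hw₁.trans' hw₂⟩
    · intro k t ht
      obtain ⟨t₁, ht₁, hw₁⟩ := ih₂.2.2 k t ht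
      obtain ⟨t₂, ht₂, hw₂⟩ := ih₁.2.2 k t₁ ht₁
      exact ⟨t₂, ht₂, hw₁.trans' hw₂⟩

theorem pull_weq_none {w w' : List (V × K)} (h : WEq Γ w w') (v : V) :
    pull Γ v w = none ↔ pull Γ v w' = none := (pull_weq h v).1

theorem pull_weq_some {w w' : List (V × K)} (h : WEq Γ w w') {v : V} {k : K}
    {t : List (V × K)} (hp : pull Γ v w = some (k, t)) :
    ∃ t', pull Γ v w' = some (k, t') ∧ WEq Γ t t' := (pull_weq h v).2.1 k t hp

/-- Pulling out a letter at a vertex adjacent to `v` does not make `v` reachable. -/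
theorem pull_none_of_pull_some {u v : V} {w t : List (V × K)} {k : K}
    (hadj : Γ.Adj u v) (h1 : pull Γ u w = some (k, t)) (h2 : pull Γ v w = none) :
    pull Γ v t = none := by
  induction w generalizing t with
  | nil => simp at h1
  | cons l r ih =>
    obtain ⟨a, x⟩ := l
    by_cases hau : a = u
    · subst hau
      rw [pull_cons_self] at h1
      simp only [Option.some.injEq, Prod.mk.injEq] at h1
      obtain ⟨rfl, rfl⟩ := h1
      rw [pull_cons_adj hadj] at h2
      simpa using h2
    · by_cases hav : a = v
      · subst hav; simp at h2
      · by_cases haav : Γ.Adj a v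
        · rw [pull_cons_adj haav] at h2
          rcases hr : pull Γ v r with _ | p
          · -- pull of u on (a,x)::r must be some
            rcases hau' : pull Γ u r with _ | ⟨k₁, r₁⟩
            · rw [pull_cons, if_neg hau] at h1
              rcases haau : Γ.Adj a u with _
              all_goals simp_all
            · rw [pull_cons, if_neg hau] at h1
              by_cases haau : Γ.Adj a u
              · rw [if_pos haau, hau'] at h1
                simp only [Option.map_some, Option.some.injEq, Prod.mk.injEq] at h1
                obtain ⟨rfl, rfl⟩ := h1
                rw [pull_cons_adj haav]
                rw [ih hau' hr]
                rfl
              · rw [if_neg haau] at h1; simp at h1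
          · rw [hr] at h2; simp at h2
        · -- a blocks v in w; show it still blocks in t
          rcases hau' : pull Γ u r with _ | ⟨k₁, r₁⟩
          · rw [pull_cons, if_neg hau] at h1
            by_cases haau : Γ.Adj a u
            · rw [if_pos haau, hau'] at h1; simp at h1
            · rw [if_neg haau] at h1; simp at h1
          · rw [pull_cons, if_neg hau] at h1
            by_cases haau : Γ.Adj a u
            · rw [if_pos haau, hau'] at h1
              simp only [Option.map_some, Option.some.injEq, Prod.mk.injEq] at h1
              obtain ⟨rfl, rfl⟩ := h1
              exact pull_cons_nadj hav haav x r₁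
            · rw [if_neg haau] at h1; simp at h1

/-- Two pulls at distinct vertices commute. -/
theorem pull_comm {u v : V} (hne : u ≠ v) {w tu tv : List (V × K)} {k l : K}
    (hu : pull Γ u w = some (k, tu)) (hv : pull Γ v w = some (l, tv)) :
    ∃ s, pull Γ v tu = some (l, s) ∧ pull Γ u tv = some (k, s) := by
  induction w generalizing tu tv with
  | nil => simp at hu
  | cons c r ih =>
    obtain ⟨a, x⟩ := c
    by_cases hau : a = u
    · subst hau
      rw [pull_cons_self] at hu
      simp only [Option.some.injEq, Prod.mk.injEq] at hu
      obtain ⟨rfl, rfl⟩ := hu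
      rw [pull_cons, if_neg hne] at hv
      by_cases hadj : Γ.Adj a v
      · rw [if_pos hadj] at hv
        rcases hvr : pull Γ v r with _ | ⟨l₁, r₁⟩
        · rw [hvr] at hv; simp at hv
        · rw [hvr] at hv
          simp only [Option.map_some, Option.some.injEq, Prod.mk.injEq] at hv
          obtain ⟨rfl, rfl⟩ := hv
          exact ⟨r₁, rfl, by rw [pull_cons_self]⟩
      · rw [if_neg hadj] at hv; simp at hv
    · by_cases hav : a = v
      · subst hav
        rw [pull_cons_self] at hv
        simp only [Option.some.injEq, Prod.mk.injEq] at hv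
        obtain ⟨rfl, rfl⟩ := hv
        rw [pull_cons, if_neg hau] at hu
        by_cases hadj : Γ.Adj a u
        · rw [if_pos hadj] at hu
          rcases hur : pull Γ u r with _ | ⟨k₁, r₁⟩
          · rw [hur] at hu; simp at hu
          · rw [hur] at hu
            simp only [Option.map_some, Option.some.injEq, Prod.mk.injEq] at hu
            obtain ⟨rfl, rfl⟩ := hu
            exact ⟨r₁, by rw [pull_cons_self], rfl⟩
        · rw [if_neg hadj] at hu; simp at hu
      · rw [pull_cons, if_neg hau] at hu
        rw [pull_cons, if_neg hav] at hv
        by_cases hadju : Γ.Adj a u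
        · rw [if_pos hadju] at hu
          by_cases hadjv : Γ.Adj a v
          · rw [if_pos hadjv] at hv
            rcases hur : pull Γ u r with _ | ⟨k₁, r₁⟩
            · rw [hur] at hu; simp at hu
            · rcases hvr : pull Γ v r with _ | ⟨l₁, r₂⟩
              · rw [hvr] at hv; simp at hv
              · rw [hur] at hu; rw [hvr] at hv
                simp only [Option.map_some, Option.some.injEq, Prod.mk.injEq] at hu hv
                obtain ⟨rfl, rfl⟩ := hu
                obtain ⟨rfl, rfl⟩ := hv
                obtain ⟨s, hs₁, hs₂⟩ := ih hur hvr
                refine ⟨(a, x) :: s, ?_, ?_⟩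
                · rw [pull_cons_adj hadjv, hs₁]; rfl
                · rw [pull_cons_adj hadju, hs₂]; rfl
          · rw [if_neg hadjv] at hv; simp at hv
        · rw [if_neg hadju] at hu; simp at hu

@[simp] theorem red_nil : Red Γ ([] : List (V × K)) := trivial

theorem red_cons {v : V} {g : K} {t : List (V × K)} :
    Red Γ ((v, g) :: t) ↔ g ≠ 1 ∧ pull Γ v t = none ∧ Red Γ t := Iff.rfl

theorem Red.tail {l : V × K} {t : List (V × K)} (h : Red Γ (l :: t)) : Red Γ t := by
  obtain ⟨v, g⟩ := l; exact h.2.2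

/-- Pulling from a reduced word yields a reduced pulled-out form. -/
theorem red_of_pull {v : V} {w w' : List (V × K)} {k : K} (hw : Red Γ w)
    (hp : pull Γ v w = some (k, w')) :
    k ≠ 1 ∧ pull Γ v w' = none ∧ Red Γ w' := by
  induction w generalizing w' with
  | nil => simp at hp
  | cons c t ih =>
    obtain ⟨a, x⟩ := c
    obtain ⟨hx, hnone, hredt⟩ := hw
    by_cases hav : a = v
    · subst hav
      rw [pull_cons_self] at hp
      simp only [Option.some.injEq, Prod.mk.injEq] at hp
      obtain ⟨rfl, rfl⟩ := hp
      exact ⟨hx, hnone, hredt⟩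
    · by_cases hadj : Γ.Adj a v
      · rw [pull_cons_adj hadj] at hp
        rcases ht : pull Γ v t with _ | ⟨k₁, t₁⟩
        · rw [ht] at hp; simp at hp
        · rw [ht] at hp
          simp only [Option.map_some, Option.some.injEq, Prod.mk.injEq] at hp
          obtain ⟨rfl, rfl⟩ := hp
          obtain ⟨hk, hnone', hred'⟩ := ih hredt ht
          refine ⟨hk, ?_, hx, ?_, hred'⟩
          · rw [pull_cons_adj hadj, hnone']; rfl
          · exact pull_none_of_pull_some hadj.symm ht hnone
      · rw [pull_cons_nadj hav hadj] at hp; simp at hp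

theorem red_swap {w w' : List (V × K)} (hs : Swap Γ w w') (h : Red Γ w) : Red Γ w' := by
  obtain ⟨p, q, a, b, hab⟩ := hs
  induction p with
  | nil =>
    obtain ⟨ua, xa⟩ := a; obtain ⟨ub, xb⟩ := b
    obtain ⟨hxa, hpa, hxb, hpb, hq⟩ := h
    rw [pull_cons_adj hab.symm] at hpa
    have hpa' : pull Γ ua q = none := by
      rcases hh : pull Γ ua q with _ | p₀
      · rfl
      · rw [hh] at hpa; simp at hpa
    refine ⟨hxb, ?_, hxa, hpa', hq⟩
    rw [pull_cons_adj hab, hpb]; rfl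
  | cons c p' ih =>
    obtain ⟨uc, xc⟩ := c
    obtain ⟨hxc, hpc, hrest⟩ := h
    refine ⟨hxc, ?_, ih hrest⟩
    exact (pull_weq_none (Swap.mk p' q a b hab).weq uc).mp hpc

theorem red_weq_iff {w w' : List (V × K)} (h : WEq Γ w w') : Red Γ w ↔ Red Γ w' := by
  induction h with
  | rel x y hxy => exact ⟨red_swap hxy, red_swap hxy.symm'⟩
  | refl x => exact Iff.rfl
  | symm x y hxy ih => exact ih.symm
  | trans x y z _ _ ih₁ ih₂ => exact ih₁.trans ih₂

theorem Red.weq {w w' : List (V × K)} (h : WEq Γ w w') (hr : Red Γ w) : Red Γ w' :=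
  (red_weq_iff h).mp hr

/-! ### The action on reduced words -/

variable [DecidableEq K]

variable (Γ) in
/-- The action of a letter `g` at vertex `v` on a word. -/
def act (v : V) (g : K) (w : List (V × K)) : List (V × K) :=
  match pull Γ v w with
  | some (k, t) => if g * k = 1 then t else (v, g * k) :: t
  | none => if g = 1 then w else (v, g) :: w

theorem act_of_pull_some {v : V} {g k : K} {w t : List (V × K)}
    (hp : pull Γ v w = some (k, t)) :
    act Γ v g w = if g * k = 1 then t else (v, g * k) :: t := by
  rw [act, hp]

theorem act_of_pull_none {v : V} {g : K} {w : List (V × K)}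
    (hp : pull Γ v w = none) :
    act Γ v g w = if g = 1 then w else (v, g) :: w := by
  rw [act, hp]

theorem act_red {v : V} (g : K) {w : List (V × K)} (hw : Red Γ w) :
    Red Γ (act Γ v g w) := by
  rcases hp : pull Γ v w with _ | ⟨k, t⟩
  · rw [act_of_pull_none hp]
    split_ifs with hg
    · exact hw
    · exact ⟨hg, hp, hw⟩
  · obtain ⟨hk, hnone, hred⟩ := red_of_pull hw hp
    rw [act_of_pull_some hp]
    split_ifs with hgk
    · exact hred
    · exact ⟨hgk, hnone, hred⟩

theorem act_weq {v : V} (g : K) {w w' : List (V × K)} (h : WEq Γ w w') :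
    WEq Γ (act Γ v g w) (act Γ v g w') := by
  rcases hp : pull Γ v w with _ | ⟨k, t⟩
  · have hp' : pull Γ v w' = none := (pull_weq_none h v).mp hp
    rw [act_of_pull_none hp, act_of_pull_none hp']
    split_ifs with hg
    · exact h
    · exact h.cons _
  · obtain ⟨t', hp', hw⟩ := pull_weq_some h hp
    rw [act_of_pull_some hp, act_of_pull_some hp']
    split_ifs with hgk
    · exact hw
    · exact hw.cons _

theorem act_one {v : V} {w : List (V × K)} (hw : Red Γ w) :
    WEq Γ (act Γ v 1 w) w := by
  rcases hp : pull Γ v w with _ | ⟨k, t⟩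
  · rw [act_of_pull_none hp, if_pos rfl]; exact weq_refl _
  · obtain ⟨hk, _, _⟩ := red_of_pull hw hp
    rw [act_of_pull_some hp, one_mul, if_neg hk]
    exact (pull_some_weq hp).symm'

theorem act_mul {v : V} (g h : K) {w : List (V × K)} (hw : Red Γ w) :
    WEq Γ (act Γ v g (act Γ v h w)) (act Γ v (g * h) w) := by
  rcases hp : pull Γ v w with _ | ⟨k, t⟩
  · rw [act_of_pull_none hp, act_of_pull_none hp]
    by_cases hh : h = 1
    · subst hh
      rw [if_pos rfl, mul_one, act_of_pull_none hp]
      exact weq_refl _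
    · rw [if_neg hh, act_of_pull_some (pull_cons_self v h w)]
      split_ifs with h1 <;> exact weq_refl _
  · obtain ⟨hk, hnone, hred⟩ := red_of_pull hw hp
    rw [act_of_pull_some hp, act_of_pull_some hp]
    by_cases hhk : h * k = 1
    · rw [if_pos hhk, act_of_pull_none hnone]
      have : g * h * k = g := by rw [mul_assoc, hhk, mul_one]
      rw [this]
      exact weq_refl _
    · rw [if_neg hhk, act_of_pull_some (pull_cons_self v (h * k) t)]
      rw [← mul_assoc]
      exact weq_refl _

/-- auxiliary case of commutation: `v` is not pullable. -/
theorem act_comm_aux {u v : V} (hadj : Γ.Adj u v) {g h : K} (hg : g ≠ 1) (hh : h ≠ 1)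
    {w : List (V × K)} (hw : Red Γ w) (hv : pull Γ v w = none) :
    WEq Γ (act Γ u g (act Γ v h w)) (act Γ v h (act Γ u g w)) := by
  have hne : u ≠ v := hadj.ne
  rw [act_of_pull_none hv, if_neg hh]
  rcases hu : pull Γ u w with _ | ⟨k, t⟩
  · rw [act_of_pull_none hu, if_neg hg]
    have h1 : pull Γ u ((v, h) :: w) = none := by
      rw [pull_cons_adj hadj.symm, hu]; rfl
    have h2 : pull Γ v ((u, g) :: w) = none := by
      rw [pull_cons_adj hadj, hv]; rfl
    rw [act_of_pull_none h1, if_neg hg, act_of_pull_none h2, if_neg hh]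
    exact swap_head hadj w
  · obtain ⟨hk, hnt, hredt⟩ := red_of_pull hw hu
    have hvt : pull Γ v t = none := pull_none_of_pull_some hadj hu hv
    have h1 : pull Γ u ((v, h) :: w) = some (k, (v, h) :: t) := by
      rw [pull_cons_adj hadj.symm, hu]; rfl
    rw [act_of_pull_some h1, act_of_pull_some hu]
    by_cases hgk : g * k = 1
    · rw [if_pos hgk, if_pos hgk, act_of_pull_none hvt, if_neg hh]
      exact weq_refl _
    · rw [if_neg hgk, if_neg hgk]
      have h2 : pull Γ v ((u, g * k) :: t) = none := by
        rw [pull_cons_adj hadj, hvt]; rfl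
      rw [act_of_pull_none h2, if_neg hh]
      exact swap_head hadj t

theorem act_comm {u v : V} (hadj : Γ.Adj u v) (g h : K) {w : List (V × K)}
    (hw : Red Γ w) :
    WEq Γ (act Γ u g (act Γ v h w)) (act Γ v h (act Γ u g w)) := by
  have hne : u ≠ v := hadj.ne
  by_cases hh : h = 1
  · subst hh
    exact ((act_weq g (act_one hw)).trans'
      (act_one (act_red g hw)).symm')
  by_cases hg : g = 1
  · subst hg
    exact ((act_one (act_red h hw)).trans'
      (act_weq h (act_one hw)).symm')
  rcases hv : pull Γ v w with _ | ⟨l, tv⟩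
  · exact act_comm_aux hadj hg hh hw hv
  rcases hu : pull Γ u w with _ | ⟨k, tu⟩
  · exact (act_comm_aux hadj.symm hh hg hw hu).symm'
  · obtain ⟨hk, hutu, hredtu⟩ := red_of_pull hw hu
    obtain ⟨hl, hvtv, hredtv⟩ := red_of_pull hw hv
    obtain ⟨s, hs₁, hs₂⟩ := pull_comm hne hu hv
    have h1 : pull Γ u ((v, h * l) :: tv) = some (k, (v, h * l) :: s) := by
      rw [pull_cons_adj hadj.symm, hs₂]; rfl
    have h2 : pull Γ v ((u, g * k) :: tu) = some (l, (u, g * k) :: s) := by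
      rw [pull_cons_adj hadj, hs₁]; rfl
    by_cases hhl : h * l = 1 <;> by_cases hgk : g * k = 1
    · have e1 : act Γ v h w = tv := by rw [act_of_pull_some hv, if_pos hhl]
      have e2 : act Γ u g tv = s := by rw [act_of_pull_some hs₂, if_pos hgk]
      have e3 : act Γ u g w = tu := by rw [act_of_pull_some hu, if_pos hgk]
      have e4 : act Γ v h tu = s := by rw [act_of_pull_some hs₁, if_pos hhl]
      rw [e1, e2, e3, e4]
      exact weq_refl _
    · have e1 : act Γ v h w = tv := by rw [act_of_pull_some hv, if_pos hhl]
      have e2 : act Γ u g tv = (u, g * k) :: s := by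
        rw [act_of_pull_some hs₂, if_neg hgk]
      have e3 : act Γ u g w = (u, g * k) :: tu := by
        rw [act_of_pull_some hu, if_neg hgk]
      have e4 : act Γ v h ((u, g * k) :: tu) = (u, g * k) :: s := by
        rw [act_of_pull_some h2, if_pos hhl]
      rw [e1, e2, e3, e4]
      exact weq_refl _
    · have e1 : act Γ v h w = (v, h * l) :: tv := by
        rw [act_of_pull_some hv, if_neg hhl]
      have e2 : act Γ u g ((v, h * l) :: tv) = (v, h * l) :: s := by
        rw [act_of_pull_some h1, if_pos hgk]
      have e3 : act Γ u g w = tu := by rw [act_of_pull_some hu, if_pos hgk]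
      have e4 : act Γ v h tu = (v, h * l) :: s := by
        rw [act_of_pull_some hs₁, if_neg hhl]
      rw [e1, e2, e3, e4]
      exact weq_refl _
    · have e1 : act Γ v h w = (v, h * l) :: tv := by
        rw [act_of_pull_some hv, if_neg hhl]
      have e2 : act Γ u g ((v, h * l) :: tv) = (u, g * k) :: (v, h * l) :: s := by
        rw [act_of_pull_some h1, if_neg hgk]
      have e3 : act Γ u g w = (u, g * k) :: tu := by
        rw [act_of_pull_some hu, if_neg hgk]
      have e4 : act Γ v h ((u, g * k) :: tu) = (v, h * l) :: (u, g * k) :: s := by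
        rw [act_of_pull_some h2, if_neg hhl]
      rw [e1, e2, e3, e4]
      exact swap_head hadj s
/-! ### The quotient by shuffle equivalence and the permutation representation -/

variable (Γ) in
/-- The type of reduced words. -/
def RW (K : Type*) [Group K] := {w : List (V × K) // Red Γ w}

instance rwSetoid (K : Type*) [Group K] : Setoid (RW Γ K) :=
  ⟨fun a b => WEq Γ a.1 b.1,
    fun _ => weq_refl _, WEq.symm', WEq.trans'⟩

variable (Γ) in
/-- Shuffle classes of reduced words. -/
def RC (K : Type*) [Group K] := Quotient (rwSetoid (Γ := Γ) K)

/-- The action of a letter on reduced words. -/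
def actRW (v : V) (g : K) (w : RW Γ K) : RW Γ K := ⟨act Γ v g w.1, act_red g w.2⟩

/-- The action of a letter on shuffle classes of reduced words. -/
def actC (v : V) (g : K) : RC Γ K → RC Γ K :=
  Quotient.map (actRW v g) (fun _ _ hab => act_weq g hab)

theorem actC_mk (v : V) (g : K) (w : RW Γ K) :
    actC v g (⟦w⟧ : RC Γ K) = ⟦actRW v g w⟧ := rfl

theorem actC_one (v : V) : actC (Γ := Γ) (K := K) v 1 = id := by
  funext x
  induction x using Quotient.ind with
  | _ w => exact Quotient.sound (act_one w.2)

theorem actC_mul (v : V) (g h : K) :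
    actC (Γ := Γ) v g ∘ actC v h = actC v (g * h) := by
  funext x
  induction x using Quotient.ind with
  | _ w => exact Quotient.sound (act_mul g h w.2)

/-- The permutation of reduced-word classes induced by a letter. -/
def actEquiv (v : V) (g : K) : Equiv.Perm (RC Γ K) where
  toFun := actC v g
  invFun := actC v g⁻¹
  left_inv := fun x => by
    have := congrFun (actC_mul (Γ := Γ) v g⁻¹ g) x
    simp only [Function.comp_apply, inv_mul_cancel, actC_one, id_eq] at this
    exact this
  right_inv := fun x => by
    have := congrFun (actC_mul (Γ := Γ) v g g⁻¹) x
    simp only [Function.comp_apply, mul_inv_cancel, actC_one, id_eq] at this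
    exact this

/-- The homomorphism from a vertex group to permutations of reduced-word classes. -/
def vertexHom (v : V) : K →* Equiv.Perm (RC Γ K) where
  toFun g := actEquiv v g
  map_one' := by
    ext x
    exact congrFun (actC_one (Γ := Γ) (K := K) v) x
  map_mul' g h := by
    ext x
    exact (congrFun (actC_mul (Γ := Γ) v g h) x).symm

variable (Γ) in
/-- The homomorphism from the graph product to permutations of reduced-word classes. -/
noncomputable def gpHom : GraphProduct Γ (fun _ : V => K) →* Equiv.Perm (RC Γ K) :=
  QuotientGroup.lift _ (Monoid.CoprodI.lift fun v => (vertexHom v : K →* _))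
    (Subgroup.normalClosure_le_normal <| by
      rintro x ⟨u, v, g, h, hadj, rfl⟩
      simp only [SetLike.mem_coe, MonoidHom.mem_ker, map_commutatorElement,
        Monoid.CoprodI.lift_of]
      refine commutatorElement_eq_one_iff_commute.mpr ?_
      show actEquiv u g * actEquiv v h = actEquiv v h * actEquiv u g
      ext x
      induction x using Quotient.ind with
      | _ w => exact Quotient.sound (act_comm hadj g h w.2))

variable (Γ) in
/-- A word of letters, as an element of the graph product. -/
def wp (w : List (V × K)) : GraphProduct Γ (fun _ : V => K) :=
  (w.map fun l => GraphProduct.of Γ (fun _ : V => K) l.1 l.2).prod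

@[simp] theorem wp_nil : wp Γ ([] : List (V × K)) = 1 := rfl

theorem wp_cons (l : V × K) (t : List (V × K)) :
    wp Γ (l :: t) = GraphProduct.of Γ (fun _ : V => K) l.1 l.2 * wp Γ t := by
  simp [wp]

theorem wp_append (w₁ w₂ : List (V × K)) :
    wp Γ (w₁ ++ w₂) = wp Γ w₁ * wp Γ w₂ := by
  simp [wp]

theorem gpHom_of (v : V) (g : K) :
    gpHom Γ (GraphProduct.of Γ (fun _ : V => K) v g) = actEquiv v g := by
  rfl

theorem gpHom_wp {w : List (V × K)} (hw : Red Γ w) :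
    gpHom Γ (wp Γ w) (⟦⟨[], red_nil⟩⟧ : RC Γ K) = ⟦⟨w, hw⟩⟧ := by
  induction w with
  | nil => simp [wp_nil]; rfl
  | cons l t ih =>
    obtain ⟨v, g⟩ := l
    obtain ⟨hg, hnone, hredt⟩ := hw
    rw [wp_cons, map_mul]
    show (gpHom Γ (GraphProduct.of Γ _ v g)) ((gpHom Γ (wp Γ t)) _) = _
    rw [ih hredt, gpHom_of]
    show actC v g ⟦⟨t, hredt⟩⟧ = _
    show (⟦actRW v g ⟨t, hredt⟩⟧ : RC Γ K) = _
    congr 1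
    apply Subtype.ext
    show act Γ v g t = (v, g) :: t
    rw [act_of_pull_none hnone, if_neg hg]

/-- Main theorem of the normal form theory : a nonempty reduced word represents a
nontrivial element of the graph product. -/
theorem red_wp_eq_one {w : List (V × K)} (hw : Red Γ w) (h : wp Γ w = 1) :
    w = [] := by
  have h1 : (gpHom Γ (wp Γ w)) (⟦⟨[], red_nil⟩⟧ : RC Γ K) = ⟦⟨[], red_nil⟩⟧ := by
    rw [h, map_one]; rfl
  have h2 := (gpHom_wp hw).symm.trans h1
  have h3 : WEq Γ w [] := Quotient.exact h2
  have := h3.length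
  simpa using this

/-! ### Reduction of words -/

theorem pull_some_decomp {v : V} {w t : List (V × K)} {k : K}
    (hp : pull Γ v w = some (k, t)) :
    ∃ mid rest, w = mid ++ (v, k) :: rest ∧ (∀ l ∈ mid, Γ.Adj l.1 v) ∧
      t = mid ++ rest := by
  induction w generalizing t with
  | nil => simp at hp
  | cons c r ih =>
    obtain ⟨a, x⟩ := c
    by_cases hav : a = v
    · subst hav
      rw [pull_cons_self] at hp
      simp only [Option.some.injEq, Prod.mk.injEq] at hp
      obtain ⟨rfl, rfl⟩ := hp
      exact ⟨[], r, rfl, by simp, rfl⟩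
    · by_cases hadj : Γ.Adj a v
      · rw [pull_cons_adj hadj] at hp
        rcases hr : pull Γ v r with _ | ⟨k₁, r₁⟩
        · rw [hr] at hp; simp at hp
        · rw [hr] at hp
          simp only [Option.map_some, Option.some.injEq, Prod.mk.injEq] at hp
          obtain ⟨rfl, rfl⟩ := hp
          obtain ⟨mid, rest, h1, h2, h3⟩ := ih hr
          exact ⟨(a, x) :: mid, rest, by simp [h1],
            by simpa [hadj] using h2, by simp [h3]⟩
      · rw [pull_cons_nadj hav hadj] at hp; simp at hp

/-- A non-reduced word has a trivial letter or a mergeable pair. -/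
theorem not_red_decomp {w : List (V × K)} (h : ¬ Red Γ w) :
    (∃ p v t, w = p ++ (v, (1 : K)) :: t) ∨
    (∃ (p : List (V × K)) (v : V) (g : K) (mid : List (V × K)) (h' : K)
        (t : List (V × K)), w = p ++ (v, g) :: (mid ++ (v, h') :: t) ∧
        ∀ l ∈ mid, Γ.Adj l.1 v) := by
  induction w with
  | nil => exact absurd red_nil h
  | cons c r ih =>
    obtain ⟨a, x⟩ := c
    by_cases hx : x = 1
    · subst hx; exact Or.inl ⟨[], a, r, rfl⟩
    rcases hp : pull Γ a r with _ | ⟨k, t⟩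
    · by_cases hr : Red Γ r
      · exact absurd ⟨hx, hp, hr⟩ h
      · rcases ih hr with ⟨p, v, t, rfl⟩ | ⟨p, v, g, mid, h', t, rfl, hmid⟩
        · exact Or.inl ⟨(a, x) :: p, v, t, rfl⟩
        · exact Or.inr ⟨(a, x) :: p, v, g, mid, h', t, rfl, hmid⟩
    · obtain ⟨mid, rest, h1, h2, _⟩ := pull_some_decomp hp
      exact Or.inr ⟨[], a, x, mid, k, rest, by simp [h1], h2⟩

/-- Letters at adjacent vertices commute in the graph product. -/
theorem of_comm {u v : V} (hadj : Γ.Adj u v) (g h : K) :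
    Commute (GraphProduct.of Γ (fun _ : V => K) u g)
      (GraphProduct.of Γ (fun _ : V => K) v h) := by
  have hmem : (⁅Monoid.CoprodI.of (M := fun _ : V => K) (i := u) g,
      Monoid.CoprodI.of (M := fun _ : V => K) (i := v) h⁆ :
      Monoid.CoprodI (fun _ : V => K)) ∈
      Subgroup.normalClosure (graphProductRels Γ (fun _ => K)) :=
    Subgroup.subset_normalClosure ⟨u, v, g, h, hadj, rfl⟩
  refine commutatorElement_eq_one_iff_commute.mp ?_
  have h1 : (QuotientGroup.mk' (Subgroup.normalClosure
      (graphProductRels Γ (fun _ : V => K))))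
      ⁅Monoid.CoprodI.of (M := fun _ : V => K) (i := u) g,
        Monoid.CoprodI.of (M := fun _ : V => K) (i := v) h⁆ = 1 :=
    (QuotientGroup.eq_one_iff _).mpr hmem
  rw [map_commutatorElement] at h1
  exact h1

theorem wp_mid_comm {v : V} (g : K) {mid : List (V × K)}
    (hmid : ∀ l ∈ mid, Γ.Adj l.1 v) :
    wp Γ mid * GraphProduct.of Γ (fun _ : V => K) v g =
      GraphProduct.of Γ (fun _ : V => K) v g * wp Γ mid := by
  induction mid with
  | nil => simp
  | cons l t ih =>
    rw [wp_cons, mul_assoc, ih (fun l hl => hmid l (List.mem_cons_of_mem _ hl)),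
      ← mul_assoc, (of_comm (hmid l List.mem_cons_self) l.2 g).eq,
      mul_assoc]

theorem wp_merge {v : V} (g h : K) {p mid t : List (V × K)}
    (hmid : ∀ l ∈ mid, Γ.Adj l.1 v) :
    wp Γ (p ++ (v, g) :: (mid ++ (v, h) :: t)) =
      wp Γ (p ++ (v, g * h) :: (mid ++ t)) := by
  rw [wp_append, wp_append, wp_cons, wp_cons, wp_append, wp_append, wp_cons]
  have h2 : wp Γ mid * (GraphProduct.of Γ (fun _ : V => K) v h * wp Γ t) =
      GraphProduct.of Γ (fun _ : V => K) v h * (wp Γ mid * wp Γ t) := by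
    rw [← mul_assoc, wp_mid_comm h hmid, mul_assoc]
  rw [h2, map_mul, mul_assoc]

theorem wp_del_one {v : V} {p t : List (V × K)} :
    wp Γ (p ++ (v, (1 : K)) :: t) = wp Γ (p ++ t) := by
  rw [wp_append, wp_append, wp_cons, map_one, one_mul]

/-- Inverse of a word. -/
def winv (w : List (V × K)) : List (V × K) := (w.reverse).map fun l => (l.1, l.2⁻¹)

theorem wp_winv (w : List (V × K)) : wp Γ (winv w) = (wp Γ w)⁻¹ := by
  induction w with
  | nil => simp [winv]
  | cons l t ih =>
    have : winv (l :: t) = winv t ++ [(l.1, l.2⁻¹)] := by simp [winv]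
    rw [this, wp_append, ih, wp_cons, wp_cons, wp_nil, mul_one, mul_inv_rev,
      map_inv]

/-! ### Box bounds for words over `Multiplicative ℤ` -/

/-- The `u`-coordinate sum of a word. -/
def sv (u : V) (w : List (V × Multiplicative ℤ)) : ℤ :=
  (w.map fun l => if l.1 = u then (l.2 : Multiplicative ℤ).toAdd else 0).sum

@[simp] theorem sv_nil (u : V) : sv u ([] : List (V × Multiplicative ℤ)) = 0 := rfl

theorem sv_cons (u : V) (l : V × Multiplicative ℤ) (t : List (V × Multiplicative ℤ)) :
    sv u (l :: t) = (if l.1 = u then l.2.toAdd else 0) + sv u t := by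
  simp [sv]

theorem sv_append (u : V) (w₁ w₂ : List (V × Multiplicative ℤ)) :
    sv u (w₁ ++ w₂) = sv u w₁ + sv u w₂ := by
  simp [sv]

/-- The partial sums of the `u`-coordinate, starting from `c`, all have absolute
value at most `L`. -/
def box1 (L : ℤ) (u : V) : ℤ → List (V × Multiplicative ℤ) → Prop
  | c, [] => |c| ≤ L
  | c, l :: t => |c| ≤ L ∧ box1 L u (c + if l.1 = u then l.2.toAdd else 0) t

theorem box1_head {L : ℤ} {u : V} {c : ℤ} {w : List (V × Multiplicative ℤ)}
    (h : box1 L u c w) : |c| ≤ L := by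
  cases w with
  | nil => exact h
  | cons l t => exact h.1

theorem box1_append {L : ℤ} {u : V} {c : ℤ} {w₁ w₂ : List (V × Multiplicative ℤ)} :
    box1 L u c (w₁ ++ w₂) ↔ box1 L u c w₁ ∧ box1 L u (c + sv u w₁) w₂ := by
  induction w₁ generalizing c with
  | nil =>
    simp only [List.nil_append, sv_nil, add_zero]
    exact ⟨fun h => ⟨box1_head h, h⟩, fun h => h.2⟩
  | cons l t ih =>
    constructor
    · rintro ⟨h1, h2⟩
      obtain ⟨h2a, h2b⟩ := ih.mp h2
      refine ⟨⟨h1, h2a⟩, ?_⟩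
      rw [sv_cons, ← add_assoc]
      exact h2b
    · rintro ⟨⟨h1, h2⟩, h3⟩
      rw [sv_cons, ← add_assoc] at h3
      exact ⟨h1, ih.mpr ⟨h2, h3⟩⟩

theorem box1_mono {L L' : ℤ} (hL : L ≤ L') {u : V} {c : ℤ}
    {w : List (V × Multiplicative ℤ)} (h : box1 L u c w) : box1 L' u c w := by
  induction w generalizing c with
  | nil => exact le_trans h hL
  | cons l t ih => exact ⟨le_trans h.1 hL, ih h.2⟩

theorem box1_const {L : ℤ} {u : V} {c : ℤ} {w : List (V × Multiplicative ℤ)}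
    (hw : ∀ l ∈ w, l.1 ≠ u) (hc : |c| ≤ L) : box1 L u c w := by
  induction w generalizing c with
  | nil => exact hc
  | cons l t ih =>
    refine ⟨hc, ?_⟩
    rw [if_neg (hw l List.mem_cons_self), add_zero]
    exact ih (fun l hl => hw l (List.mem_cons_of_mem _ hl)) hc

/-- All partial coordinate sums of a word are bounded by `L`. -/
def Box (L : ℤ) (w : List (V × Multiplicative ℤ)) : Prop := ∀ u : V, box1 L u 0 w

theorem box_del_one {L : ℤ} {v : V} {p t : List (V × Multiplicative ℤ)}
    (h : Box L (p ++ (v, (1 : Multiplicative ℤ)) :: t)) : Box L (p ++ t) := by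
  intro u
  have h1 := h u
  rw [box1_append] at h1 ⊢
  refine ⟨h1.1, ?_⟩
  have h2 := h1.2
  obtain ⟨h3, h4⟩ := h2
  simpa using h4

theorem box_merge {L : ℤ} {v : V} {g h : Multiplicative ℤ}
    {p mid t : List (V × Multiplicative ℤ)}
    (hmid : ∀ l ∈ mid, l.1 ≠ v)
    (hb : Box L (p ++ (v, g) :: (mid ++ (v, h) :: t))) :
    Box L (p ++ (v, g * h) :: (mid ++ t)) := by
  intro u
  have h1 := hb u
  rw [box1_append] at h1 ⊢
  refine ⟨h1.1, ?_⟩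
  obtain ⟨hcp, h2⟩ := h1.2
  rw [box1_append] at h2
  obtain ⟨hmidb, h3⟩ := h2
  obtain ⟨hjun, h4⟩ := h3
  refine ⟨hcp, ?_⟩
  rw [box1_append]
  by_cases huv : v = u
  · subst huv
    have e1 : (if ((v : V), g).1 = v then Multiplicative.toAdd g else 0)
        = Multiplicative.toAdd g := if_pos rfl
    have e2 : (if ((v : V), h).1 = v then Multiplicative.toAdd h else 0)
        = Multiplicative.toAdd h := if_pos rfl
    have e3 : (if ((v : V), g * h).1 = v then Multiplicative.toAdd (g * h) else 0)
        = Multiplicative.toAdd g + Multiplicative.toAdd h := (if_pos rfl).trans rfl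
    have hsm : sv v mid = 0 := by
      simp only [sv]
      rw [List.sum_eq_zero]
      intro x hx
      simp only [List.mem_map] at hx
      obtain ⟨l, hl, rfl⟩ := hx
      rw [if_neg (hmid l hl)]
    rw [e1] at hmidb hjun h4
    rw [e2] at h4
    rw [hsm, add_zero] at hjun h4
    rw [e3, hsm, add_zero]
    constructor
    · refine box1_const hmid ?_
      rw [← add_assoc]
      exact box1_head h4
    · rw [← add_assoc]
      exact h4
  · have e1 : (if ((v : V), g).1 = u then Multiplicative.toAdd g else 0) = 0 :=
      if_neg huv
    have e2 : (if ((v : V), h).1 = u then Multiplicative.toAdd h else 0) = 0 :=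
      if_neg huv
    have e3 : (if ((v : V), g * h).1 = u then Multiplicative.toAdd (g * h) else 0)
        = 0 := if_neg huv
    rw [e1, add_zero] at hmidb hjun h4
    rw [e2, add_zero] at h4
    rw [e3, add_zero]
    exact ⟨hmidb, h4⟩

/-- Any box-bounded word can be reduced to a box-bounded reduced word representing
the same element. -/
theorem reduce_word {L : ℤ} :
    ∀ (n : ℕ) (w : List (V × Multiplicative ℤ)), w.length ≤ n → Box L w →
    ∃ w', Red Γ w' ∧ wp Γ w' = wp Γ w ∧ Box L w' := by
  intro n
  induction n with
  | zero =>
    intro w hw hb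
    rw [Nat.le_zero, List.length_eq_zero_iff] at hw
    subst hw
    exact ⟨[], red_nil, rfl, hb⟩
  | succ n ih =>
    intro w hw hb
    by_cases hred : Red Γ w
    · exact ⟨w, hred, rfl, hb⟩
    rcases not_red_decomp hred with ⟨p, v, t, rfl⟩ | ⟨p, v, g, mid, h', t, rfl, hmid⟩
    · have hlen : (p ++ t).length ≤ n := by
        have := hw
        simp only [List.length_append, List.length_cons] at this ⊢
        omega
      obtain ⟨w', h1, h2, h3⟩ := ih (p ++ t) hlen (box_del_one hb)
      exact ⟨w', h1, h2.trans wp_del_one.symm, h3⟩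
    · have hmid' : ∀ l ∈ mid, l.1 ≠ v := fun l hl => (hmid l hl).ne
      have hlen : (p ++ (v, g * h') :: (mid ++ t)).length ≤ n := by
        have := hw
        simp only [List.length_append, List.length_cons] at this ⊢
        omega
      obtain ⟨w', h1, h2, h3⟩ := ih _ hlen (box_merge hmid' hb)
      exact ⟨w', h1, h2.trans (wp_merge g h' hmid).symm, h3⟩

/-- In a box-bounded word every letter has absolute value at most `2 * L`. -/
theorem box_letter {L : ℤ} {w : List (V × Multiplicative ℤ)} (hb : Box L w)
    {l : V × Multiplicative ℤ} (hl : l ∈ w) : |l.2.toAdd| ≤ 2 * L := by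
  obtain ⟨p, t, rfl⟩ := List.append_of_mem hl
  have h1 := hb l.1
  rw [box1_append] at h1
  obtain ⟨-, h2, h3⟩ := h1
  simp only [if_pos rfl] at h3
  have h4 := box1_head h3
  have h5 : |(0 : ℤ) + sv l.1 p| ≤ L := h2
  calc |l.2.toAdd| = |(0 + sv l.1 p + l.2.toAdd) - (0 + sv l.1 p)| := by ring_nf
    _ ≤ |0 + sv l.1 p + l.2.toAdd| + |0 + sv l.1 p| := abs_sub _ _
    _ ≤ L + L := add_le_add h4 h5
    _ = 2 * L := by ring

/-! ### Remaining auxiliary lemmas -/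

theorem red_letters {w : List (V × K)} (h : Red Γ w) : ∀ l ∈ w, l.2 ≠ 1 := by
  induction w with
  | nil => intro l hl; simp at hl
  | cons c t ih =>
    obtain ⟨a, x⟩ := c
    obtain ⟨hx, -, hredt⟩ := h
    intro l hl
    rcases List.mem_cons.mp hl with rfl | hl
    · exact hx
    · exact ih hredt l hl

variable (Γ) in
theorem wp_surj (x : GraphProduct Γ (fun _ : V => K)) : ∃ w, wp Γ w = x := by
  let T : Subgroup (GraphProduct Γ (fun _ : V => K)) :=
  { carrier := {x | ∃ w, wp Γ w = x}
    one_mem' := ⟨[], rfl⟩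
    mul_mem' := by
      rintro a b ⟨wa, rfl⟩ ⟨wb, rfl⟩
      exact ⟨wa ++ wb, wp_append wa wb⟩
    inv_mem' := by
      rintro a ⟨wa, rfl⟩
      exact ⟨winv wa, wp_winv wa⟩ }
  let j : ∀ v : V, K →* T := fun v =>
    (GraphProduct.of Γ (fun _ : V => K) v).codRestrict T
      (fun g => ⟨[(v, g)], by simp [wp_cons]⟩)
  let ψ := Monoid.CoprodI.lift j
  have h2 : T.subtype.comp ψ =
      QuotientGroup.mk' (Subgroup.normalClosure (graphProductRels Γ (fun _ : V => K))) := by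
    refine Monoid.CoprodI.ext_hom _ _ (fun v => ?_)
    ext g
    show (T.subtype) (ψ (Monoid.CoprodI.of g)) = _
    rw [show ψ (Monoid.CoprodI.of g) = j v g from Monoid.CoprodI.lift_of j g]
    rfl
  obtain ⟨y, rfl⟩ := QuotientGroup.mk'_surjective
    (Subgroup.normalClosure (graphProductRels Γ (fun _ : V => K))) x
  have h3 : ((ψ y : T) : GraphProduct Γ (fun _ : V => K)) =
      QuotientGroup.mk' _ y := by
    have := congrArg (fun f : Monoid.CoprodI (fun _ : V => K) →* _ => f y) h2
    exact this
  rw [← h3]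
  exact (ψ y).2

theorem proj_of (v : V) (g : K) :
    GraphProduct.proj Γ (fun _ : V => K) (GraphProduct.of Γ (fun _ : V => K) v g) =
      Pi.mulSingle v g := rfl

theorem proj_wp (w : List (V × Multiplicative ℤ)) (u : V) :
    Multiplicative.toAdd
        (GraphProduct.proj Γ (fun _ : V => Multiplicative ℤ) (wp Γ w) u) =
      sv u w := by
  induction w with
  | nil => simp [wp_nil]
  | cons l t ih =>
    rw [wp_cons, map_mul, sv_cons]
    have : GraphProduct.proj Γ (fun _ : V => Multiplicative ℤ)
        (GraphProduct.of Γ (fun _ : V => Multiplicative ℤ) l.1 l.2) u =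
        if l.1 = u then l.2 else 1 := by
      rw [proj_of]
      rcases eq_or_ne u l.1 with h | h
      · subst h; rw [Pi.mulSingle_eq_same, if_pos rfl]
      · rw [Pi.mulSingle_eq_of_ne h, if_neg (fun hh => h hh.symm)]
    rw [Pi.mul_apply, this, toAdd_mul, ih]
    rcases eq_or_ne l.1 u with h | h
    · rw [if_pos h, if_pos h]
    · rw [if_neg h, if_neg h, toAdd_one]

theorem sv_winv (u : V) (w : List (V × Multiplicative ℤ)) :
    sv u (winv w) = - sv u w := by
  induction w with
  | nil => simp [winv]
  | cons l t ih =>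
    have : winv (l :: t) = winv t ++ [(l.1, l.2⁻¹)] := by simp [winv]
    rw [this, sv_append, ih, sv_cons, sv_cons, sv_nil, add_zero]
    rcases eq_or_ne l.1 u with h | h
    · rw [if_pos h, if_pos h, toAdd_inv]; ring
    · rw [if_neg h, if_neg h]; ring

theorem box1_winv {L : ℤ} {u : V} :
    ∀ (c : ℤ) (w : List (V × Multiplicative ℤ)), box1 L u c w →
      box1 L u (c + sv u w) (winv w) := by
  intro c w
  induction w generalizing c with
  | nil => intro h; simpa [winv] using h
  | cons l t ih =>
    rintro ⟨h1, h2⟩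
    have hw : winv (l :: t) = winv t ++ [(l.1, l.2⁻¹)] := by simp [winv]
    rw [hw, box1_append]
    constructor
    · have := ih _ h2
      rw [sv_cons, ← add_assoc]
      exact this
    · have he : c + sv u (l :: t) + sv u (winv t) =
          c + (if l.1 = u then l.2.toAdd else 0) := by
        rw [sv_winv, sv_cons]; ring
      rw [he]
      refine ⟨box1_head h2, ?_⟩
      have he2 : c + (if l.1 = u then l.2.toAdd else 0) +
          (if (l.1, l.2⁻¹).1 = u then Multiplicative.toAdd l.2⁻¹ else 0) = c := by
        rcases eq_or_ne l.1 u with h | h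
        · rw [if_pos h, if_pos h, toAdd_inv]; ring
        · rw [if_neg h, if_neg h]; ring
      rw [he2]
      exact h1

/-- The ℓ¹-size of a word. -/
def nwt (w : List (V × Multiplicative ℤ)) : ℕ :=
  (w.map fun l => l.2.toAdd.natAbs).sum

theorem box1_nwt {L : ℤ} (u : V) :
    ∀ (c : ℤ) (w : List (V × Multiplicative ℤ)), |c| + (nwt w : ℤ) ≤ L →
      box1 L u c w := by
  intro c w
  induction w generalizing c with
  | nil =>
    intro h
    have h0 : (nwt ([] : List (V × Multiplicative ℤ)) : ℤ) = 0 := rfl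
    rw [h0, add_zero] at h
    exact h
  | cons l t ih =>
    intro h
    have hnwt : (nwt (l :: t) : ℤ) = |l.2.toAdd| + (nwt t : ℤ) := by
      have h1 : nwt (l :: t) = l.2.toAdd.natAbs + nwt t := rfl
      rw [h1, Int.abs_eq_natAbs]
      push_cast
      ring
    rw [hnwt] at h
    have habs : |c| ≥ 0 := abs_nonneg c
    have hnt : (0 : ℤ) ≤ nwt t := Int.natCast_nonneg _
    have hla : (0 : ℤ) ≤ |l.2.toAdd| := abs_nonneg _
    refine ⟨by linarith, ?_⟩
    refine ih _ ?_
    have : |c + if l.1 = u then l.2.toAdd else 0| ≤ |c| + |l.2.toAdd| := by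
      rcases eq_or_ne l.1 u with hh | hh
      · rw [if_pos hh]; exact abs_add_le _ _
      · rw [if_neg hh, add_zero]; linarith
    linarith

theorem box_nwt (w : List (V × Multiplicative ℤ)) : Box (nwt w : ℤ) w :=
  fun u => box1_nwt u 0 w (by simp)

theorem box_mono {L L' : ℤ} (h : L ≤ L') {w : List (V × Multiplicative ℤ)}
    (hb : Box L w) : Box L' w := fun u => box1_mono h (hb u)

/-! ### The reduction homomorphism modulo `m` -/

/-- Reduction modulo `m` on the vertex group. -/
def modHomK (m : ℕ) : Multiplicative ℤ →* Multiplicative (ZMod m) :=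
  AddMonoidHom.toMultiplicative (Int.castAddHom (ZMod m))

variable (Γ) in
/-- The reduction homomorphism from the RAAG to the mod-`m` graph product. -/
noncomputable def phi (m : ℕ) :
    GraphProduct Γ (fun _ : V => Multiplicative ℤ) →*
      GraphProduct Γ (fun _ : V => Multiplicative (ZMod m)) :=
  QuotientGroup.lift _
    (Monoid.CoprodI.lift fun v =>
      (GraphProduct.of Γ (fun _ : V => Multiplicative (ZMod m)) v).comp (modHomK m))
    (Subgroup.normalClosure_le_normal <| by
      rintro x ⟨u, v, g, h, hadj, rfl⟩
      simp only [SetLike.mem_coe, MonoidHom.mem_ker, map_commutatorElement,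
        Monoid.CoprodI.lift_of, MonoidHom.comp_apply]
      exact commutatorElement_eq_one_iff_commute.mpr (of_comm hadj _ _))

theorem phi_of (m : ℕ) (v : V) (g : Multiplicative ℤ) :
    phi Γ m (GraphProduct.of Γ (fun _ : V => Multiplicative ℤ) v g) =
      GraphProduct.of Γ (fun _ : V => Multiplicative (ZMod m)) v (modHomK m g) := rfl

/-- Reduction modulo `m` on words. -/
def mapm (m : ℕ) (w : List (V × Multiplicative ℤ)) :
    List (V × Multiplicative (ZMod m)) := w.map fun l => (l.1, modHomK m l.2)

theorem phi_wp (m : ℕ) (w : List (V × Multiplicative ℤ)) :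
    phi Γ m (wp Γ w) = wp Γ (mapm m w) := by
  induction w with
  | nil => simp [wp_nil, mapm]
  | cons l t ih =>
    rw [wp_cons, map_mul, phi_of, ih]
    rfl

theorem pull_mapm (m : ℕ) (v : V) (w : List (V × Multiplicative ℤ)) :
    pull Γ v (mapm m w) =
      Option.map (fun p => (modHomK m p.1, mapm m p.2)) (pull Γ v w) := by
  induction w with
  | nil => simp [mapm]
  | cons l t ih =>
    obtain ⟨u, x⟩ := l
    show pull Γ v ((u, modHomK m x) :: mapm m t) = _
    by_cases huv : u = v
    · subst huv
      rw [pull_cons_self, pull_cons_self]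
      rfl
    · by_cases hadj : Γ.Adj u v
      · rw [pull_cons_adj hadj, pull_cons_adj hadj, ih]
        rcases pull Γ v t with _ | p <;> rfl
      · rw [pull_cons_nadj huv hadj, pull_cons_nadj huv hadj]
        rfl

theorem red_mapm (m : ℕ) {w : List (V × Multiplicative ℤ)} (hred : Red Γ w)
    (hne : ∀ l ∈ w, modHomK m l.2 ≠ 1) : Red Γ (mapm m w) := by
  induction w with
  | nil => exact red_nil
  | cons l t ih =>
    obtain ⟨v, g⟩ := l
    obtain ⟨hg, hnone, hredt⟩ := hred
    refine ⟨hne (v, g) List.mem_cons_self, ?_, ?_⟩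
    · show pull Γ v (mapm m t) = none
      rw [pull_mapm, hnone]; rfl
    · exact ih hredt (fun l hl => hne l (List.mem_cons_of_mem _ hl))

end GPNF

/-- Every finitely generated subgroup of the commutator subgroup `[A(Γ), A(Γ)]` of the
right-angled Artin group on a finite graph `Γ` embeds into `[GP_m(Γ), GP_m(Γ)]` for
some finite `m ≥ 2`, where `GP_m(Γ)` is the graph product over `Γ` of cyclic groups of
order `m`. -/
theorem fg_subgroup_of_raag_commutator_embeds
    {V : Type*} [Finite V] (Γ : SimpleGraph V)
    (H : Subgroup (GraphProduct Γ (fun _ => Multiplicative ℤ)))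
    (hle : H ≤ commutator (GraphProduct Γ (fun _ => Multiplicative ℤ)))
    (hfg : H.FG) :
    ∃ m : ℕ, 2 ≤ m ∧
      ∃ f : H →* commutator (GraphProduct Γ (fun _ => Multiplicative (ZMod m))),
        Function.Injective f := by
  classical
  obtain ⟨S, hS⟩ := hfg
  let word : GraphProduct Γ (fun _ : V => Multiplicative ℤ) →
      List (V × Multiplicative ℤ) := fun x => Classical.choose (GPNF.wp_surj Γ x)
  have hword : ∀ x, GPNF.wp Γ (word x) = x :=
    fun x => Classical.choose_spec (GPNF.wp_surj Γ x)
  set L : ℕ := S.sup fun s => GPNF.nwt (word s) with hL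
  set m : ℕ := 2 * L + 2 with hm
  refine ⟨m, by omega, ?_⟩
  have hcomm : ∀ x ∈ commutator (GraphProduct Γ (fun _ : V => Multiplicative ℤ)),
      GPNF.phi Γ m x ∈
        commutator (GraphProduct Γ (fun _ : V => Multiplicative (ZMod m))) := by
    intro x hx
    have h1 : (commutator (GraphProduct Γ (fun _ : V => Multiplicative ℤ))).map
        (GPNF.phi Γ m) ≤
        commutator (GraphProduct Γ (fun _ : V => Multiplicative (ZMod m))) := by
      rw [commutator_def, Subgroup.map_commutator, commutator_def]
      exact Subgroup.commutator_mono le_top le_top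
    exact h1 (Subgroup.mem_map_of_mem _ hx)
  refine ⟨((GPNF.phi Γ m).comp H.subtype).codRestrict
    (commutator (GraphProduct Γ (fun _ : V => Multiplicative (ZMod m))))
    (fun h => hcomm _ (hle h.2)), ?_⟩
  rw [injective_iff_map_eq_one]
  intro a ha
  have ha1 : GPNF.phi Γ m a.1 = 1 := congrArg Subtype.val ha
  have hP : ∀ x ∈ H, ∃ w, GPNF.wp Γ w = x ∧ GPNF.Box (L : ℤ) w ∧
      ∀ u, GPNF.sv u w = 0 := by
    intro x hx
    rw [← hS] at hx
    induction hx using Subgroup.closure_induction with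
    | mem y hy =>
      refine ⟨word y, hword y, ?_, ?_⟩
      · refine GPNF.box_mono ?_ (GPNF.box_nwt (word y))
        have h5 : GPNF.nwt (word y) ≤ L :=
          Finset.le_sup (f := fun s => GPNF.nwt (word s)) hy
        exact_mod_cast h5
      · intro u
        have hyH : y ∈ H := by rw [← hS]; exact Subgroup.subset_closure hy
        have hker : GraphProduct.proj Γ (fun _ : V => Multiplicative ℤ) y = 1 :=
          Abelianization.commutator_subset_ker
            (GraphProduct.proj Γ (fun _ : V => Multiplicative ℤ)) (hle hyH)
        have h2 := GPNF.proj_wp (Γ := Γ) (word y) u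
        rw [hword y, hker] at h2
        simpa using h2.symm
    | one =>
      exact ⟨[], rfl, fun u => show |(0 : ℤ)| ≤ (L : ℤ) by simp, fun u => rfl⟩
    | mul x y hx hy px py =>
      obtain ⟨wx, rfl, hbx, htx⟩ := px
      obtain ⟨wy, rfl, hby, hty⟩ := py
      refine ⟨wx ++ wy, GPNF.wp_append wx wy, ?_, ?_⟩
      · intro u
        rw [GPNF.box1_append]
        exact ⟨hbx u, by rw [htx u, add_zero]; exact hby u⟩
      · intro u
        rw [GPNF.sv_append, htx u, hty u, add_zero]
    | inv x hx px =>
      obtain ⟨wx, rfl, hbx, htx⟩ := px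
      refine ⟨GPNF.winv wx, GPNF.wp_winv wx, ?_, ?_⟩
      · intro u
        have h3 := GPNF.box1_winv 0 wx (hbx u)
        rw [htx u, add_zero] at h3
        exact h3
      · intro u
        rw [GPNF.sv_winv, htx u, neg_zero]
  obtain ⟨w, hwp, hbox, -⟩ := hP a.1 a.2
  obtain ⟨w', hred, hwp', hbox'⟩ :=
    GPNF.reduce_word (Γ := Γ) (L := (L : ℤ)) w.length w le_rfl hbox
  have hphi : GPNF.wp Γ (GPNF.mapm m w') = 1 := by
    rw [← GPNF.phi_wp, hwp', hwp, ha1]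
  have hletters : ∀ l ∈ w', GPNF.modHomK m l.2 ≠ 1 := by
    intro l hl hcon
    have hne1 : l.2 ≠ 1 := GPNF.red_letters hred l hl
    have habs : |l.2.toAdd| ≤ 2 * (L : ℤ) := GPNF.box_letter hbox' hl
    have hcast : ((l.2.toAdd : ℤ) : ZMod m) = 0 := by
      have h4 := hcon
      rw [show GPNF.modHomK m l.2
          = Multiplicative.ofAdd ((l.2.toAdd : ℤ) : ZMod m) from rfl,
        ofAdd_eq_one] at h4
      exact h4
    have hdvd : ((m : ℕ) : ℤ) ∣ l.2.toAdd :=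
      (ZMod.intCast_zmod_eq_zero_iff_dvd _ _).mp hcast
    have hne0 : l.2.toAdd ≠ 0 := fun h0 => hne1 (by
      have : l.2 = Multiplicative.ofAdd 0 := by
        rw [← h0]; rfl
      simpa using this)
    have hge := Int.le_of_dvd (abs_pos.mpr hne0) ((dvd_abs _ _).mpr hdvd)
    rw [hm] at hge
    push_cast at hge
    omega
  have hredm := GPNF.red_mapm m hred hletters
  have hnil : GPNF.mapm m w' = [] := GPNF.red_wp_eq_one hredm hphi
  have hw'nil : w' = [] := by
    cases w' with
    | nil => rfl
    | cons l t => simp [GPNF.mapm] at hnil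
  have hx1 : a.1 = 1 := by
    rw [← hwp, ← hwp', hw'nil, GPNF.wp_nil]
  exact Subtype.ext hx1
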